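/- Let (X,d) be a metric space, K ≥ 1, and for each n ≥ 1 let A_n ⊆ X be a finite set with card(A_n) ≤ K·n. Call a point z ∈ X safe if z ∉ ⋃_{n≥1} A_n and for every δ > 0 there is N such that for all n ≥ N the ball B(z, e^{−δn}) is disjoint from A_n. Then the set of points of X that are not safe has Hausdorff dimension 0. -/

import Mathlib

open Metric Set MeasureTheory Filter
open scoped NNReal ENNReal Topology

private lemma exp_rpow_aux (x d : ℝ) : Real.exp x ^ d = Real.exp (x * d) := by
  rw [Real.rpow_def_of_pos (Real.exp_pos x), Real.log_exp]

/-- The "limsup" exceptional set at scale `c > 0` has Hausdorff dimension zero. -/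
lemma dimH_limsup_zero {X : Type*} [MetricSpace X]
    (K : ℝ) (A : ℕ → Set X)
    (hfin : ∀ n : ℕ, 1 ≤ n → (A n).Finite)
    (hcard : ∀ n : ℕ, 1 ≤ n → ((A n).ncard : ℝ) ≤ K * n)
    (c : ℝ) (hc : 0 < c) :
    dimH {z : X | ∀ N : ℕ, ∃ n, N + 1 ≤ n ∧
      (ball z (Real.exp (-c * n)) ∩ A n).Nonempty} = 0 := by
  borelize X
  set E : Set X := {z : X | ∀ N : ℕ, ∃ n, N + 1 ≤ n ∧
      (ball z (Real.exp (-c * n)) ∩ A n).Nonempty} with hE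
  have key : ∀ d : ℝ≥0, 0 < d → dimH E ≤ d := by
    intro d hd
    have hd0 : (0 : ℝ) ≤ (d : ℝ) := d.coe_nonneg
    apply dimH_le_of_hausdorffMeasure_ne_top
    -- the dominating series
    set G : ℕ → ℝ≥0∞ :=
      fun m => ENNReal.ofReal (K * m * (2 * Real.exp (-c * m)) ^ (d : ℝ)) with hG
    -- nonnegativity of the real terms
    have hKm : ∀ m : ℕ, (0 : ℝ) ≤ K * m := by
      intro m
      rcases Nat.eq_zero_or_pos m with h0 | h1
      · simp [h0]
      · exact le_trans (Nat.cast_nonneg _) (hcard m h1)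
    have hterm_nonneg : ∀ m : ℕ, (0 : ℝ) ≤ K * m * (2 * Real.exp (-c * m)) ^ (d : ℝ) := by
      intro m
      exact mul_nonneg (hKm m) (Real.rpow_nonneg (by positivity) _)
    -- the dominating series is finite
    have hC : (∑' m, G m) ≠ ⊤ := by
      set q : ℝ := Real.exp (-(c * d)) with hq
      have hq1 : ‖q‖ < 1 := by
        rw [Real.norm_eq_abs, abs_of_pos (Real.exp_pos _)]
        refine Real.exp_lt_one_iff.2 ?_
        have hd' : (0:ℝ) < d := by exact_mod_cast hd
        nlinarith
      have hsum0 : Summable (fun m : ℕ => (K * 2 ^ (d : ℝ)) * ((m : ℝ) * q ^ m)) := by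
        have := summable_pow_mul_geometric_of_norm_lt_one (R := ℝ) 1 hq1
        simpa using this.mul_left (K * 2 ^ (d : ℝ))
      have hrw : ∀ m : ℕ, K * m * (2 * Real.exp (-c * m)) ^ (d : ℝ)
          = (K * 2 ^ (d : ℝ)) * ((m : ℝ) * q ^ m) := by
        intro m
        have h1 : (2 * Real.exp (-c * m)) ^ (d : ℝ)
            = 2 ^ (d : ℝ) * Real.exp (-c * m) ^ (d : ℝ) :=
          Real.mul_rpow (by norm_num) (Real.exp_pos _).le
        have h2 : Real.exp (-c * m) ^ (d : ℝ) = q ^ m := by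
          rw [exp_rpow_aux, hq, ← Real.exp_nat_mul]
          ring_nf
        rw [h1, h2]; ring
      have hsum : Summable (fun m : ℕ => K * m * (2 * Real.exp (-c * m)) ^ (d : ℝ)) :=
        hsum0.congr fun m => (hrw m).symm
      have : (∑' m, G m) = ENNReal.ofReal
          (∑' m : ℕ, K * m * (2 * Real.exp (-c * m)) ^ (d : ℝ)) :=
        (ENNReal.ofReal_tsum_of_nonneg hterm_nonneg hsum).symm
      rw [this]
      exact ENNReal.ofReal_ne_top
    -- key term bound
    have hGle : ∀ m : ℕ, 1 ≤ m →
        ((A m).ncard : ℝ≥0∞) * ENNReal.ofReal ((2 * Real.exp (-c * m)) ^ (d : ℝ)) ≤ G m := by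
      intro m hm
      rw [hG]
      calc ((A m).ncard : ℝ≥0∞) * ENNReal.ofReal ((2 * Real.exp (-c * m)) ^ (d : ℝ))
          = ENNReal.ofReal (((A m).ncard : ℝ) * (2 * Real.exp (-c * m)) ^ (d : ℝ)) := by
            rw [ENNReal.ofReal_mul (Nat.cast_nonneg _), ENNReal.ofReal_natCast]
        _ ≤ ENNReal.ofReal (K * m * (2 * Real.exp (-c * m)) ^ (d : ℝ)) :=
            ENNReal.ofReal_le_ofReal
              (mul_le_mul_of_nonneg_right (hcard m hm) (Real.rpow_nonneg (by positivity) _))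
    -- countability of the fibers
    haveI : ∀ N n : ℕ, Countable (A (N + 1 + n) : Set X) := fun N n =>
      ((hfin _ (by omega)).countable).to_subtype
    haveI : ∀ N n : ℕ, Fintype (A (N + 1 + n) : Set X) := fun N n =>
      (hfin _ (by omega)).fintype
    -- the covers
    set t : ∀ N : ℕ, ((n : ℕ) × (A (N + 1 + n) : Set X)) → Set X :=
      fun N i => ball (i.2 : X) (Real.exp (-c * (N + 1 + i.1))) with htdef
    set r : ℕ → ℝ≥0∞ := fun N => ENNReal.ofReal (2 * Real.exp (-c * (N + 1))) with hrdef
    have hr : Tendsto r atTop (𝓝 0) := by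
      rw [hrdef]
      have h1 : Tendsto (fun N : ℕ => -c * ((N : ℝ) + 1)) atTop atBot := by
        apply Tendsto.const_mul_atTop_of_neg (neg_neg_iff_pos.2 hc)
        exact tendsto_atTop_add_const_right _ _ tendsto_natCast_atTop_atTop
      have h2 : Tendsto (fun N : ℕ => 2 * Real.exp (-c * ((N : ℝ) + 1))) atTop (𝓝 0) := by
        simpa using (Real.tendsto_exp_atBot.comp h1).const_mul 2
      simpa only [ENNReal.ofReal_zero, Function.comp_def] using (ENNReal.continuous_ofReal.tendsto 0).comp h2
    have hdiam : ∀ N (i : (n : ℕ) × (A (N + 1 + n) : Set X)),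
        EMetric.diam (t N i) ≤ ENNReal.ofReal (2 * Real.exp (-c * (N + 1 + i.1))) := by
      intro N i
      rw [htdef]
      calc EMetric.diam (ball (i.2 : X) (Real.exp (-c * (N + 1 + i.1))))
          = EMetric.diam (Metric.eball (i.2 : X)
              (ENNReal.ofReal (Real.exp (-c * (N + 1 + i.1))))) := by
            rw [Metric.emetric_ball]
        _ ≤ 2 * ENNReal.ofReal (Real.exp (-c * (N + 1 + i.1))) := EMetric.diam_ball
        _ = ENNReal.ofReal (2 * Real.exp (-c * (N + 1 + i.1))) := by
            rw [ENNReal.ofReal_mul (by norm_num), ENNReal.ofReal_ofNat]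
    have ht : ∀ N (i : (n : ℕ) × (A (N + 1 + n) : Set X)), EMetric.diam (t N i) ≤ r N := by
      intro N i
      refine (hdiam N i).trans ?_
      rw [hrdef]
      apply ENNReal.ofReal_le_ofReal
      have : Real.exp (-c * (N + 1 + i.1)) ≤ Real.exp (-c * (N + 1)) := by
        apply Real.exp_le_exp.2
        nlinarith [Nat.cast_nonneg (α := ℝ) i.1, hc]
      linarith
    have hst : ∀ N : ℕ, E ⊆ ⋃ i, t N i := by
      intro N z hz
      obtain ⟨n, hn, a, ha⟩ := hz N
      obtain ⟨haz, haA⟩ := ha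
      have hnm : N + 1 + (n - (N + 1)) = n := by omega
      refine mem_iUnion.2 ⟨⟨n - (N + 1), ⟨a, by rw [hnm]; exact haA⟩⟩, ?_⟩
      have hcast : ((N : ℝ) + 1 + (↑(n - (N + 1)) : ℝ)) = (n : ℝ) := by
        rw [Nat.cast_sub hn]; push_cast; ring
      rw [htdef]
      simp only
      rw [mem_ball, dist_comm, hcast]
      rw [mem_ball] at haz
      exact haz
    -- apply the covering bound
    have hμ := Measure.hausdorffMeasure_le_liminf_tsum (d : ℝ) E r hr t
      (Eventually.of_forall ht) (Eventually.of_forall hst)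
    -- bound each term of the liminf
    have hF : ∀ N : ℕ,
        (∑' i : (n : ℕ) × (A (N + 1 + n) : Set X), EMetric.diam (t N i) ^ (d : ℝ))
          ≤ ∑' m, G m := by
      intro N
      have h1 : ∀ i : (n : ℕ) × (A (N + 1 + n) : Set X),
          EMetric.diam (t N i) ^ (d : ℝ)
            ≤ ENNReal.ofReal ((2 * Real.exp (-c * (N + 1 + i.1))) ^ (d : ℝ)) := by
        intro i
        calc EMetric.diam (t N i) ^ (d : ℝ)
            ≤ (ENNReal.ofReal (2 * Real.exp (-c * (N + 1 + i.1)))) ^ (d : ℝ) :=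
              ENNReal.rpow_le_rpow (hdiam N i) hd0
          _ = ENNReal.ofReal ((2 * Real.exp (-c * (N + 1 + i.1))) ^ (d : ℝ)) :=
              ENNReal.ofReal_rpow_of_pos (by positivity)
      calc (∑' i : (n : ℕ) × (A (N + 1 + n) : Set X), EMetric.diam (t N i) ^ (d : ℝ))
          ≤ ∑' i : (n : ℕ) × (A (N + 1 + n) : Set X),
              ENNReal.ofReal ((2 * Real.exp (-c * (N + 1 + (i.1 : ℕ)))) ^ (d : ℝ)) :=
            ENNReal.tsum_le_tsum h1
        _ = ∑' (n : ℕ), ∑' (_ : (A (N + 1 + n) : Set X)),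
              ENNReal.ofReal ((2 * Real.exp (-c * (N + 1 + (n : ℕ)))) ^ (d : ℝ)) :=
            ENNReal.tsum_sigma' _
        _ = ∑' (n : ℕ), ((A (N + 1 + n)).ncard : ℝ≥0∞) *
              ENNReal.ofReal ((2 * Real.exp (-c * (N + 1 + (n : ℕ)))) ^ (d : ℝ)) := by
            congr 1
            funext n
            rw [tsum_fintype]
            simp only [Finset.sum_const, Finset.card_univ, nsmul_eq_mul]
            congr 1
            rw [Set.ncard_eq_toFinset_card', Set.toFinset_card]
        _ ≤ ∑' (n : ℕ), G (N + 1 + n) :=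
            ENNReal.tsum_le_tsum fun n => by
              have := hGle (N + 1 + n) (by omega)
              simpa using this
        _ ≤ ∑' m, G m :=
            ENNReal.tsum_comp_le_tsum_of_injective
              (fun a b h => by simpa using h : Function.Injective fun n : ℕ => N + 1 + n) G
    have hlim : μH[(d : ℝ)] E ≤ ∑' m, G m :=
      hμ.trans (liminf_le_of_frequently_le' (Frequently.of_forall hF))
    exact (lt_of_le_of_lt hlim hC.lt_top).ne
  -- conclude dimH E = 0
  refine le_antisymm ?_ zero_le
  by_contra h0
  have hpos : 0 < dimH E := pos_iff_ne_zero.2 fun h => h0 (h ▸ le_rfl)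
  obtain ⟨d, hd0, hdlt⟩ := ENNReal.lt_iff_exists_nnreal_btwn.1 hpos
  exact absurd (key d (by exact_mod_cast hd0)) (not_le.2 hdlt)

/-- **Safe points have full dimension complement zero.** Let `A n ⊆ X` be finite sets
with `card (A n) ≤ K * n` for `n ≥ 1` (`K ≥ 1`). A point `z` is *safe* if
`z ∉ ⋃_{n ≥ 1} A n` and for every `δ > 0`, for all large `n`, the ball
`B(z, e^{-δ n})` is disjoint from `A n`. Then the set of non-safe points has
Hausdorff dimension `0`. -/
theorem non_safe_points_dimH_zero {X : Type*} [MetricSpace X]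
    (K : ℝ) (hK : 1 ≤ K) (A : ℕ → Set X)
    (hfin : ∀ n : ℕ, 1 ≤ n → (A n).Finite)
    (hcard : ∀ n : ℕ, 1 ≤ n → ((A n).ncard : ℝ) ≤ K * n) :
    dimH {z : X | ¬ ((∀ n : ℕ, 1 ≤ n → z ∉ A n) ∧
      ∀ δ > (0 : ℝ), ∃ N : ℕ, 1 ≤ N ∧ ∀ n ≥ N,
        ball z (Real.exp (-δ * n)) ∩ A n = ∅)} = 0 := by
  classical
  set Ek : ℕ → Set X := fun k => {z : X | ∀ N : ℕ, ∃ n, N + 1 ≤ n ∧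
      (ball z (Real.exp (-(1 / ((k : ℝ) + 1)) * n)) ∩ A n).Nonempty} with hEk
  set S : Set X := ⋃ n : ℕ, A (n + 1) with hS
  have hsub : {z : X | ¬ ((∀ n : ℕ, 1 ≤ n → z ∉ A n) ∧
      ∀ δ > (0 : ℝ), ∃ N : ℕ, 1 ≤ N ∧ ∀ n ≥ N,
        ball z (Real.exp (-δ * n)) ∩ A n = ∅)} ⊆ S ∪ ⋃ k : ℕ, Ek k := by
    intro z hz
    by_cases hP : ∀ n : ℕ, 1 ≤ n → z ∉ A n
    · have hQ : ¬ ∀ δ > (0 : ℝ), ∃ N : ℕ, 1 ≤ N ∧ ∀ n ≥ N,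
          ball z (Real.exp (-δ * n)) ∩ A n = ∅ := fun q => hz ⟨hP, q⟩
      push_neg at hQ
      obtain ⟨δ, hδ, hbad⟩ := hQ
      obtain ⟨k, hk⟩ := exists_nat_gt (1 / δ)
      have hkd : 1 / ((k : ℝ) + 1) ≤ δ := by
        rw [div_le_iff₀ (by positivity)]
        have h1 : 1 / δ < (k : ℝ) + 1 := hk.trans (by linarith)
        rw [div_lt_iff₀ hδ] at h1
        nlinarith
      right
      refine mem_iUnion.2 ⟨k, ?_⟩
      intro N
      obtain ⟨n, hn, hne⟩ := hbad (N + 1) (by omega)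
      refine ⟨n, hn, ?_⟩
      obtain ⟨a, haz, haA⟩ := hne
      refine ⟨a, ?_, haA⟩
      rw [mem_ball] at haz ⊢
      refine haz.trans_le (Real.exp_le_exp.2 ?_)
      have hn0 : (0 : ℝ) ≤ (n : ℝ) := Nat.cast_nonneg _
      nlinarith
    · push_neg at hP
      obtain ⟨n, hn, hzn⟩ := hP
      left
      refine mem_iUnion.2 ⟨n - 1, ?_⟩
      have : n - 1 + 1 = n := by omega
      rw [this]
      exact hzn
  refine le_antisymm ?_ zero_le
  calc dimH {z : X | ¬ ((∀ n : ℕ, 1 ≤ n → z ∉ A n) ∧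
      ∀ δ > (0 : ℝ), ∃ N : ℕ, 1 ≤ N ∧ ∀ n ≥ N,
        ball z (Real.exp (-δ * n)) ∩ A n = ∅)}
      ≤ dimH (S ∪ ⋃ k : ℕ, Ek k) := dimH_mono hsub
    _ = max (dimH S) (dimH (⋃ k : ℕ, Ek k)) := dimH_union _ _
    _ ≤ 0 := by
        have hScount : S.Countable :=
          countable_iUnion fun n => (hfin (n + 1) (by omega)).countable
        have hEkdim : ∀ k : ℕ, dimH (Ek k) = 0 := fun k =>
          dimH_limsup_zero K A hfin hcard _ (by positivity)
        rw [dimH_countable hScount, dimH_iUnion]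
        simp [hEkdim]
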